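/- A nonlinear contact curve in P³ has degree at least 3, and in degree 3 it is the rational normal curve: if β is a nondegenerate alternating bilinear form on ℂ⁴ and F : Fin 4 → ℂ[X] is a contact curve for β with gcd(F₀,…,F₃) = 1 whose components span a ℂ-subspace of dimension at least 3, then the components are ℂ-linearly independent, max_i natDegree(F_i) ≥ 3, and if max_i natDegree(F_i) = 3 there exists A ∈ GL(4,ℂ) with F_i = Σ_{j=0}^{3} A_{ij}·X^j for all i. -/

import Mathlib

open Polynomial Matrix

section Aux

lemma wronskian_zero_dep (p q : ℂ[X]) (h : p * derivative q - q * derivative p = 0) :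
    ∃ α β : ℂ, ¬(α = 0 ∧ β = 0) ∧ C α * p + C β * q = 0 := by
  rcases eq_or_ne p 0 with hp | hp
  · exact ⟨1, 0, by simp, by simp [hp]⟩
  rcases eq_or_ne q 0 with hq | hq
  · exact ⟨0, 1, by simp, by simp [hq]⟩
  set g := GCDMonoid.gcd p q with hg
  have hgne : g ≠ 0 := gcd_ne_zero_of_left hp
  obtain ⟨p₁, hp₁⟩ : g ∣ p := gcd_dvd_left p q
  obtain ⟨q₁, hq₁⟩ : g ∣ q := gcd_dvd_right p q
  have hcop : IsCoprime p₁ q₁ := by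
    have h2 := isCoprime_div_gcd_div_gcd (p := p) (q := q) hq
    have e1 : p / g = p₁ := by rw [hp₁]; exact mul_div_cancel_left₀ _ hgne
    have e2 : q / g = q₁ := by rw [hq₁]; exact mul_div_cancel_left₀ _ hgne
    rwa [← hg, e1, e2] at h2
  have hw : g * g * (p₁ * derivative q₁ - q₁ * derivative p₁) = 0 := by
    rw [hp₁, hq₁] at h
    rw [← h]; simp only [derivative_mul]; ring
  have hw0 : wronskian p₁ q₁ = 0 := by
    rcases mul_eq_zero.mp hw with h1 | h1
    · exact absurd h1 (mul_ne_zero hgne hgne)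
    · rw [wronskian, ← h1]; ring
  obtain ⟨hd1, hd2⟩ := hcop.wronskian_eq_zero_iff.mp hw0
  have hp₁0 : p₁ ≠ 0 := fun h0 => hp (by rw [hp₁, h0, mul_zero])
  have hq₁0 : q₁ ≠ 0 := fun h0 => hq (by rw [hq₁, h0, mul_zero])
  obtain ⟨u, hu⟩ := natDegree_eq_zero.mp (natDegree_eq_zero_of_derivative_eq_zero hd1)
  obtain ⟨w, hw'⟩ := natDegree_eq_zero.mp (natDegree_eq_zero_of_derivative_eq_zero hd2)
  have hune : u ≠ 0 := fun h0 => hp₁0 (by rw [← hu, h0, map_zero])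
  refine ⟨w, -u, fun hc => hune (neg_eq_zero.mp hc.2), ?_⟩
  rw [hp₁, hq₁, ← hu, ← hw', map_neg]; ring

lemma func_span {c f : Fin 4 → ℂ} {j₀ : Fin 4} (hcj : c j₀ ≠ 0)
    (h : ∀ x, c ⬝ᵥ x = 0 → f ⬝ᵥ x = 0) : f = (f j₀ / c j₀) • c := by
  funext k
  have hx : c ⬝ᵥ (c j₀ • (Pi.single k 1 : Fin 4 → ℂ) - c k • (Pi.single j₀ 1 : Fin 4 → ℂ)) = 0 := by
    simp [dotProduct_sub, dotProduct_smul, dotProduct_single]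
    ring
  have h2 := h _ hx
  simp [dotProduct_sub, dotProduct_smul, dotProduct_single] at h2
  have : f k = f j₀ / c j₀ * c k := by
    field_simp
    linear_combination h2
  simpa using this

lemma exists_contact_basis (B : Matrix (Fin 4) (Fin 4) ℂ) (halt : Bᵀ = -B) (hdet : B.det ≠ 0)
    (c : Fin 4 → ℂ) (hc : c ≠ 0) :
    ∃ v a b w₁ w₂ w₃ : Fin 4 → ℂ,
      v ⬝ᵥ B *ᵥ v = 0 ∧ v ⬝ᵥ B *ᵥ a = 0 ∧ v ⬝ᵥ B *ᵥ b = 0 ∧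
      a ⬝ᵥ B *ᵥ v = 0 ∧ a ⬝ᵥ B *ᵥ a = 0 ∧ a ⬝ᵥ B *ᵥ b = 1 ∧
      b ⬝ᵥ B *ᵥ v = 0 ∧ b ⬝ᵥ B *ᵥ a = -1 ∧ b ⬝ᵥ B *ᵥ b = 0 ∧
      ∀ x : Fin 4 → ℂ, c ⬝ᵥ x = 0 →
        x = (w₁ ⬝ᵥ x) • v + (w₂ ⬝ᵥ x) • a + (w₃ ⬝ᵥ x) • b := by
  have hBu : IsUnit B.det := isUnit_iff_ne_zero.mpr hdet
  have hBtu : IsUnit (Bᵀ).det := by rwa [Matrix.det_transpose, isUnit_iff_ne_zero]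
  have hskew : ∀ x y : Fin 4 → ℂ, y ⬝ᵥ B *ᵥ x = -(x ⬝ᵥ B *ᵥ y) := by
    intro x y
    rw [Matrix.dotProduct_mulVec, ← Matrix.mulVec_transpose, halt, Matrix.neg_mulVec,
      neg_dotProduct, dotProduct_comm]
  have halt0 : ∀ x : Fin 4 → ℂ, x ⬝ᵥ B *ᵥ x = 0 := by
    intro x
    linear_combination (hskew x x) / 2
  have hvecinj : ∀ z : Fin 4 → ℂ, z ᵥ* B = 0 → z = 0 := by
    intro z hz
    have h2 := congrArg (· ᵥ* B⁻¹) hz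
    simpa [Matrix.vecMul_vecMul, Matrix.mul_nonsing_inv B hBu] using h2
  set v : Fin 4 → ℂ := (Bᵀ)⁻¹ *ᵥ c with hvdef
  have hBtv : Bᵀ *ᵥ v = c := by
    have h1 := Matrix.mulVec_mulVec c Bᵀ Bᵀ⁻¹
    rw [Matrix.mul_nonsing_inv _ hBtu, Matrix.one_mulVec] at h1
    rw [hvdef]; exact h1
  have hvpair : ∀ x, v ⬝ᵥ B *ᵥ x = c ⬝ᵥ x := by
    intro x
    rw [Matrix.dotProduct_mulVec, ← Matrix.mulVec_transpose, hBtv]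
  have hvne : v ≠ 0 := by
    intro h0
    apply hc
    rw [← hBtv, h0, Matrix.mulVec_zero]
  have key : ∃ a b : Fin 4 → ℂ, c ⬝ᵥ a = 0 ∧ c ⬝ᵥ b = 0 ∧ a ⬝ᵥ B *ᵥ b ≠ 0 := by
    by_contra hno
    push_neg at hno
    obtain ⟨j₀, hj₀⟩ := Function.ne_iff.mp hc
    simp only [Pi.zero_apply] at hj₀
    obtain ⟨k, l, hkl, hkj, hlj⟩ :=
      (by decide : ∀ j : Fin 4, ∃ k l : Fin 4, k ≠ l ∧ k ≠ j ∧ l ≠ j) j₀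
    set u : Fin 4 → Fin 4 → ℂ :=
      fun m => c j₀ • (Pi.single m 1 : Fin 4 → ℂ) - c m • (Pi.single j₀ 1 : Fin 4 → ℂ) with hu
    have hcu : ∀ m, c ⬝ᵥ u m = 0 := by
      intro m
      simp [hu, dotProduct_sub, dotProduct_smul, dotProduct_single]
      ring
    have hfk : ∀ m, ∃ μ : ℂ, (u m) ᵥ* B = μ • c := by
      intro m
      refine ⟨((u m ᵥ* B) j₀) / c j₀, func_span hj₀ ?_⟩
      intro x hx
      rw [← Matrix.dotProduct_mulVec]
      exact hno _ _ (hcu m) hx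
    obtain ⟨μk, hμk⟩ := hfk k
    obtain ⟨μl, hμl⟩ := hfk l
    have hz0 : μl • u k - μk • u l = 0 := by
      apply hvecinj
      rw [Matrix.sub_vecMul, Matrix.smul_vecMul, Matrix.smul_vecMul, hμk, hμl, smul_smul,
        smul_smul, mul_comm, sub_self]
    have hukk : u k k = c j₀ := by
      simp [hu, Pi.single_apply, hkj]
    have hulk : u l k = 0 := by
      simp [hu, Pi.single_apply, hkl.symm, hkj]
    have hukl : u k l = 0 := by
      simp [hu, Pi.single_apply, hkl, hlj]
    have hull : u l l = c j₀ := by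
      simp [hu, Pi.single_apply, hlj]
    have hμl0 : μl = 0 := by
      have := congrFun hz0 k
      simp [hukk, hulk] at this
      rcases this with h | h
      · exact h
      · exact absurd h hj₀
    have hμk0 : μk = 0 := by
      have := congrFun hz0 l
      simp [hukl, hull] at this
      rcases this with h | h
      · exact h
      · exact absurd h hj₀
    have huk0 : u k = 0 := by
      apply hvecinj
      rw [hμk, hμk0, zero_smul]
    have := congrFun huk0 k
    rw [hukk] at this
    exact hj₀ this
  obtain ⟨a₀, b₀, hca₀, hcb₀, hs⟩ := key
  obtain ⟨i₀, hi₀⟩ := Function.ne_iff.mp hvne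
  simp only [Pi.zero_apply] at hi₀
  set s := a₀ ⬝ᵥ B *ᵥ b₀ with hsdef
  set a₁ : Fin 4 → ℂ := s⁻¹ • a₀ with ha₁
  set a : Fin 4 → ℂ := a₁ - (a₁ i₀ / v i₀) • v with hadef
  set b : Fin 4 → ℂ := b₀ - (b₀ i₀ / v i₀) • v with hbdef
  have hcv : c ⬝ᵥ v = 0 := by rw [← hvpair v]; exact halt0 v
  have hca₁ : c ⬝ᵥ a₁ = 0 := by simp [ha₁, dotProduct_smul, hca₀]
  have hca : c ⬝ᵥ a = 0 := by simp [hadef, dotProduct_sub, dotProduct_smul, hca₁, hcv]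
  have hcb : c ⬝ᵥ b = 0 := by simp [hbdef, dotProduct_sub, dotProduct_smul, hcb₀, hcv]
  have P1 : v ⬝ᵥ B *ᵥ v = 0 := halt0 v
  have P2 : v ⬝ᵥ B *ᵥ a = 0 := by rw [hvpair]; exact hca
  have P3 : v ⬝ᵥ B *ᵥ b = 0 := by rw [hvpair]; exact hcb
  have P4 : a ⬝ᵥ B *ᵥ v = 0 := by rw [hskew v a, P2, neg_zero]
  have P5 : a ⬝ᵥ B *ᵥ a = 0 := halt0 a
  have P6 : a ⬝ᵥ B *ᵥ b = 1 := by
    have e2 : a₁ ⬝ᵥ B *ᵥ v = 0 := by rw [hskew v a₁, hvpair]; simp [hca₁]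
    have e3 : v ⬝ᵥ B *ᵥ b₀ = 0 := by rw [hvpair]; exact hcb₀
    have e1 : a₁ ⬝ᵥ B *ᵥ b₀ = 1 := by
      rw [ha₁, smul_dotProduct, ← hsdef, smul_eq_mul, inv_mul_cancel₀ hs]
    rw [hadef, hbdef]
    simp [Matrix.mulVec_sub, Matrix.mulVec_smul, dotProduct_sub, sub_dotProduct,
      dotProduct_smul, smul_dotProduct, e1, e2, e3, P1]
  have P7 : b ⬝ᵥ B *ᵥ v = 0 := by rw [hskew v b, P3, neg_zero]
  have P8 : b ⬝ᵥ B *ᵥ a = -1 := by rw [hskew a b, P6]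
  have P9 : b ⬝ᵥ B *ᵥ b = 0 := halt0 b
  have hai₀ : a i₀ = 0 := by
    simp [hadef, Pi.sub_apply]
    field_simp
    ring
  have hbi₀ : b i₀ = 0 := by
    simp [hbdef, Pi.sub_apply]
    field_simp
    ring
  have hli : LinearIndependent ℂ ![v, a, b] := by
    rw [Fintype.linearIndependent_iff]
    intro g hg
    have hg' : g 0 • v + g 1 • a + g 2 • b = 0 := by
      simpa [Fin.sum_univ_three] using hg
    have h2 : g 2 = 0 := by
      have := congrArg (fun z => a ⬝ᵥ B *ᵥ z) hg'
      simpa [Matrix.mulVec_add, Matrix.mulVec_smul, dotProduct_add, dotProduct_smul,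
        P4, P5, P6] using this
    have h1 : g 1 = 0 := by
      have := congrArg (fun z => b ⬝ᵥ B *ᵥ z) hg'
      simpa [Matrix.mulVec_add, Matrix.mulVec_smul, dotProduct_add, dotProduct_smul,
        P7, P8, P9] using this
    have h0 : g 0 = 0 := by
      rw [h1, h2] at hg'
      simp only [zero_smul, add_zero] at hg'
      rcases smul_eq_zero.mp hg' with h | h
      · exact h
      · exact absurd h hvne
    intro i; fin_cases i <;> assumption
  obtain ⟨j₁, hj₁⟩ := Function.ne_iff.mp hc
  simp only [Pi.zero_apply] at hj₁
  let ℓ : (Fin 4 → ℂ) →ₗ[ℂ] ℂ :=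
    { toFun := fun x => c ⬝ᵥ x
      map_add' := fun x y => dotProduct_add c x y
      map_smul' := fun t x => by simp [dotProduct_smul] }
  have hℓ : ∀ x, ℓ x = c ⬝ᵥ x := fun x => rfl
  have hrange : LinearMap.range ℓ = ⊤ := by
    rw [LinearMap.range_eq_top]
    intro y
    refine ⟨(y / c j₁) • (Pi.single j₁ 1 : Fin 4 → ℂ), ?_⟩
    rw [hℓ, dotProduct_smul, dotProduct_single]
    field_simp
    simp [smul_eq_mul, hj₁]
  have hker3 : Module.finrank ℂ (LinearMap.ker ℓ) = 3 := by
    have hrk := LinearMap.finrank_range_add_finrank_ker ℓ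
    rw [hrange] at hrk
    simp only [finrank_top] at hrk
    have h4 : Module.finrank ℂ (Fin 4 → ℂ) = 4 := by simp
    have h1 : Module.finrank ℂ ℂ = 1 := Module.finrank_self ℂ
    omega
  have hspan3 : Module.finrank ℂ (Submodule.span ℂ (Set.range ![v, a, b])) = 3 := by
    rw [finrank_span_eq_card hli]
    simp
  have hle : Submodule.span ℂ (Set.range ![v, a, b]) ≤ LinearMap.ker ℓ := by
    rw [Submodule.span_le]
    rintro x ⟨i, rfl⟩
    fin_cases i <;> simp only [LinearMap.mem_ker, SetLike.mem_coe] <;>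
      first
        | exact hcv
        | exact hca
        | exact hcb
  have heq : Submodule.span ℂ (Set.range ![v, a, b]) = LinearMap.ker ℓ :=
    Submodule.eq_of_le_of_finrank_le hle (by rw [hker3, hspan3])
  refine ⟨v, a, b, (v i₀)⁻¹ • (Pi.single i₀ 1 : Fin 4 → ℂ), -(Bᵀ *ᵥ b), Bᵀ *ᵥ a,
    P1, P2, P3, P4, P5, P6, P7, P8, P9, ?_⟩
  intro x hx
  have hx' : x ∈ Submodule.span ℂ (Set.range ![v, a, b]) := by
    rw [heq]; exact hx
  obtain ⟨g, hg⟩ := (Submodule.mem_span_range_iff_exists_fun ℂ).mp hx'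
  have hg' : g 0 • v + g 1 • a + g 2 • b = x := by
    simpa [Fin.sum_univ_three] using hg
  have h2 : a ⬝ᵥ B *ᵥ x = g 2 := by
    rw [← hg']
    simp [Matrix.mulVec_add, Matrix.mulVec_smul, dotProduct_add, dotProduct_smul, P4, P5, P6]
  have h1 : b ⬝ᵥ B *ᵥ x = -(g 1) := by
    rw [← hg']
    simp [Matrix.mulVec_add, Matrix.mulVec_smul, dotProduct_add, dotProduct_smul, P7, P8, P9]
  have h0 : x i₀ = g 0 * v i₀ := by
    have := congrFun hg' i₀
    simp only [Pi.add_apply, Pi.smul_apply, smul_eq_mul, hai₀, hbi₀, mul_zero, add_zero] at this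
    linear_combination -this
  have hw1 : (((v i₀)⁻¹ • (Pi.single i₀ 1 : Fin 4 → ℂ))) ⬝ᵥ x = g 0 := by
    rw [smul_dotProduct, single_dotProduct, smul_eq_mul, one_mul, h0]
    field_simp
  have hw2 : (-(Bᵀ *ᵥ b)) ⬝ᵥ x = g 1 := by
    rw [neg_dotProduct, Matrix.mulVec_transpose, ← Matrix.dotProduct_mulVec, h1, neg_neg]
  have hw3 : (Bᵀ *ᵥ a) ⬝ᵥ x = g 2 := by
    rw [Matrix.mulVec_transpose, ← Matrix.dotProduct_mulVec, h2]
  rw [hw1, hw2, hw3, hg']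

lemma pairing_expand (B : Matrix (Fin 4) (Fin 4) ℂ) (v a b : Fin 4 → ℂ)
    (G₁ G₂ G₃ H₁ H₂ H₃ : ℂ[X]) :
    ∑ i : Fin 4, ∑ j : Fin 4, C (B i j) *
        ((C (v i) * G₁ + C (a i) * G₂ + C (b i) * G₃) *
         (C (v j) * H₁ + C (a j) * H₂ + C (b j) * H₃)) =
      C (v ⬝ᵥ B *ᵥ v) * (G₁ * H₁) + C (v ⬝ᵥ B *ᵥ a) * (G₁ * H₂) + C (v ⬝ᵥ B *ᵥ b) * (G₁ * H₃) +
      C (a ⬝ᵥ B *ᵥ v) * (G₂ * H₁) + C (a ⬝ᵥ B *ᵥ a) * (G₂ * H₂) + C (a ⬝ᵥ B *ᵥ b) * (G₂ * H₃) +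
      C (b ⬝ᵥ B *ᵥ v) * (G₃ * H₁) + C (b ⬝ᵥ B *ᵥ a) * (G₃ * H₂) + C (b ⬝ᵥ B *ᵥ b) * (G₃ * H₃) := by
  set_option maxHeartbeats 1000000 in
  simp only [dotProduct, Matrix.mulVec, Fin.sum_univ_four, _root_.map_add, _root_.map_mul]
  set_option maxHeartbeats 1000000 in
  ring

end Aux

/-- The minor `W_ij = F_i·F_j' − F_j·F_i'` of a curve `F : Fin 4 → ℂ[X]`. -/
noncomputable def minor4 (F : Fin 4 → ℂ[X]) (i j : Fin 4) : ℂ[X] :=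
  F i * derivative (F j) - F j * derivative (F i)

/-- `F` is a contact curve for the alternating bilinear form with matrix `B`. -/
noncomputable def IsContactCurve (B : Matrix (Fin 4) (Fin 4) ℂ) (F : Fin 4 → ℂ[X]) : Prop :=
  ∑ p ∈ Finset.univ.filter (fun p : Fin 4 × Fin 4 => p.1 < p.2),
    C (B p.1 p.2) * minor4 F p.1 p.2 = 0

/-- A nonlinear contact curve in `P³` is nondegenerate and has degree at least `3`; 
in degree `3` it is a rational normal curve. -/
theorem contact_curve_degree_ge_three (B : Matrix (Fin 4) (Fin 4) ℂ)
    (halt : Bᵀ = -B) (hdet : B.det ≠ 0)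
    (F : Fin 4 → ℂ[X]) (hcontact : IsContactCurve B F)
    (hgcd : Finset.univ.gcd F = 1)
    (hspan : 3 ≤ Module.finrank ℂ ↥(Submodule.span ℂ (Set.range F))) :
    LinearIndependent ℂ F ∧
    3 ≤ Finset.univ.sup (fun i => (F i).natDegree) ∧
    (Finset.univ.sup (fun i => (F i).natDegree) = 3 →
      ∃ A : Matrix (Fin 4) (Fin 4) ℂ, A.det ≠ 0 ∧
        ∀ i, F i = ∑ j : Fin 4, C (A i j) * X ^ (j : ℕ)) := by
  -- Step A : basic skew facts and the contact identity as a full double sum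
  have hskewB : ∀ i j : Fin 4, B j i = -B i j := by
    intro i j
    have := congrFun (congrFun halt i) j
    simpa [Matrix.transpose_apply] using this
  have hdiag : ∀ i : Fin 4, B i i = 0 := fun i => by linear_combination (hskewB i i) / 2
  have hS : ∑ i : Fin 4, ∑ j : Fin 4, C (B i j) * (F i * derivative (F j)) = 0 := by
    have hc' := hcontact
    unfold IsContactCurve at hc'
    rw [Finset.sum_filter, ← Finset.univ_product_univ, Finset.sum_product] at hc'
    simp only [minor4] at hc'
    simp only [Fin.sum_univ_four] at hc'
    have d1 : ((0:Fin 4) < 1) := by decide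
    have d2 : ((0:Fin 4) < 2) := by decide
    have d3 : ((0:Fin 4) < 3) := by decide
    have d4 : ((1:Fin 4) < 2) := by decide
    have d5 : ((1:Fin 4) < 3) := by decide
    have d6 : ((2:Fin 4) < 3) := by decide
    have n1 : ¬((1:Fin 4) < 0) := by decide
    have n2 : ¬((2:Fin 4) < 0) := by decide
    have n3 : ¬((2:Fin 4) < 1) := by decide
    have n4 : ¬((3:Fin 4) < 0) := by decide
    have n5 : ¬((3:Fin 4) < 1) := by decide
    have n6 : ¬((3:Fin 4) < 2) := by decide
    have n0 : ∀ i : Fin 4, ¬(i < i) := fun i => lt_irrefl i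
    simp only [if_pos d1, if_pos d2, if_pos d3, if_pos d4, if_pos d5, if_pos d6,
      if_neg n1, if_neg n2, if_neg n3, if_neg n4, if_neg n5, if_neg n6,
      if_neg (n0 0), if_neg (n0 1), if_neg (n0 2), if_neg (n0 3), add_zero, zero_add] at hc'
    simp only [Fin.sum_univ_four]
    rw [hdiag 0, hdiag 1, hdiag 2, hdiag 3, hskewB 0 1, hskewB 0 2, hskewB 0 3, hskewB 1 2,
      hskewB 1 3, hskewB 2 3]
    simp only [map_neg, map_zero]
    linear_combination hc'
  -- Step B : linear independence
  have hLI : LinearIndependent ℂ F := by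
    by_contra hni
    obtain ⟨g, hgsum, i₁, hi₁⟩ := Fintype.not_linearIndependent_iff.mp hni
    have hgne : g ≠ 0 := fun h0 => hi₁ (by rw [h0, Pi.zero_apply])
    obtain ⟨v, a, b, w₁, w₂, w₃, P1, P2, P3, P4, P5, P6, P7, P8, P9, hdec⟩ :=
      exists_contact_basis B halt hdet g hgne
    set G₁ : ℂ[X] := ∑ j : Fin 4, C (w₁ j) * F j with hG₁
    set G₂ : ℂ[X] := ∑ j : Fin 4, C (w₂ j) * F j with hG₂
    set G₃ : ℂ[X] := ∑ j : Fin 4, C (w₃ j) * F j with hG₃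
    have hdecomp : ∀ i, F i = C (v i) * G₁ + C (a i) * G₂ + C (b i) * G₃ := by
      intro i
      ext n
      have hx : g ⬝ᵥ (fun j => (F j).coeff n) = 0 := by
        have h2 := congrArg (fun P : ℂ[X] => P.coeff n) hgsum
        simpa [Polynomial.finset_sum_coeff, Polynomial.coeff_smul, dotProduct,
          smul_eq_mul] using h2
      have h3 := congrFun (hdec _ hx) i
      simp only [Pi.add_apply, Pi.smul_apply, smul_eq_mul, dotProduct] at h3
      simp only [Polynomial.coeff_add, Polynomial.coeff_C_mul, hG₁, hG₂, hG₃,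
        Polynomial.finset_sum_coeff]
      linear_combination h3
    have hderiv : ∀ i, derivative (F i) =
        C (v i) * derivative G₁ + C (a i) * derivative G₂ + C (b i) * derivative G₃ := by
      intro i; rw [hdecomp i]; simp
    have hS2 : ∑ i : Fin 4, ∑ j : Fin 4, C (B i j) *
        ((C (v i) * G₁ + C (a i) * G₂ + C (b i) * G₃) *
         (C (v j) * derivative G₁ + C (a j) * derivative G₂ + C (b j) * derivative G₃)) = 0 := by
      rw [← hS]
      apply Finset.sum_congr rfl
      intro i _
      apply Finset.sum_congr rfl
      intro j _
      rw [← hdecomp i, ← hderiv j]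
    rw [pairing_expand, P1, P2, P3, P4, P5, P6, P7, P8, P9] at hS2
    simp only [map_zero, Polynomial.C_1, map_neg, zero_mul, one_mul, neg_mul, zero_add, add_zero] at hS2
    have hW : G₂ * derivative G₃ - G₃ * derivative G₂ = 0 := by linear_combination hS2
    obtain ⟨α, β, hαβ, hlin⟩ := wronskian_zero_dep G₂ G₃ hW
    have key : ∃ p q : ℂ[X], ∀ i, ∃ r s : ℂ, F i = C r * p + C s * q := by
      rcases eq_or_ne β 0 with hβ | hβ
      · have hα : α ≠ 0 := fun h0 => hαβ ⟨h0, hβ⟩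
        have hG₂0 : G₂ = 0 := by
          have h4 : C α * G₂ = 0 := by rw [hβ] at hlin; simpa using hlin
          rcases mul_eq_zero.mp h4 with h | h
          · exact absurd (by simpa using h) hα
          · exact h
        exact ⟨G₁, G₃, fun i => ⟨v i, b i, by rw [hdecomp i, hG₂0]; ring⟩⟩
      · have hG₃eq : G₃ = C (-α/β) * G₂ := by
          apply mul_left_cancel₀ (show (C β : ℂ[X]) ≠ 0 by simpa using hβ)
          rw [← mul_assoc, ← _root_.map_mul]
          have h5 : β * (-α/β) = -α := by field_simp
          rw [h5, map_neg]
          linear_combination hlin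
        exact ⟨G₁, G₂, fun i => ⟨v i, a i + b i * (-α/β), by
          rw [hdecomp i, hG₃eq, _root_.map_add, _root_.map_mul]; ring⟩⟩
    obtain ⟨p, q, hpq⟩ := key
    have hle2 : Submodule.span ℂ (Set.range F) ≤ Submodule.span ℂ ({p, q} : Set ℂ[X]) := by
      rw [Submodule.span_le]
      rintro _ ⟨i, rfl⟩
      obtain ⟨r, s, hrs⟩ := hpq i
      rw [hrs, ← Polynomial.smul_eq_C_mul, ← Polynomial.smul_eq_C_mul]
      exact Submodule.mem_span_pair.mpr ⟨r, s, rfl⟩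
    haveI : FiniteDimensional ℂ (Submodule.span ℂ ({p, q} : Set ℂ[X])) :=
      FiniteDimensional.span_of_finite ℂ (Set.toFinite _)
    have h2 : Module.finrank ℂ (Submodule.span ℂ ({p, q} : Set ℂ[X])) ≤ 2 := by
      classical
      have h3 := finrank_span_finset_le_card (R := ℂ) ({p, q} : Finset ℂ[X])
      have h4 : (({p, q} : Finset ℂ[X]) : Set ℂ[X]) = ({p, q} : Set ℂ[X]) := by simp
      have h5 : ({p, q} : Finset ℂ[X]).card ≤ 2 :=
        le_trans (Finset.card_insert_le p {q}) (by simp)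
      rw [Set.finrank, h4] at h3
      omega
    have h6 := le_trans hspan (le_trans (Submodule.finrank_mono hle2) h2)
    omega
  -- Step C : degree at least 3
  have hdeg3 : 3 ≤ Finset.univ.sup fun i => (F i).natDegree := by
    by_contra hlt
    push_neg at hlt
    have hmem : ∀ i, F i ∈ Polynomial.degreeLT ℂ 3 := by
      intro i
      rw [Polynomial.mem_degreeLT]
      have h1 : (F i).natDegree < 3 :=
        lt_of_le_of_lt (Finset.le_sup (f := fun i => (F i).natDegree) (Finset.mem_univ i)) hlt
      exact lt_of_le_of_lt Polynomial.degree_le_natDegree (by exact_mod_cast h1)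
    haveI : Module.Finite ℂ (Polynomial.degreeLT ℂ 3) :=
      Module.Finite.equiv (Polynomial.degreeLTEquiv ℂ 3).symm
    have hLI' : LinearIndependent ℂ (fun i => (⟨F i, hmem i⟩ : Polynomial.degreeLT ℂ 3)) := by
      apply LinearIndependent.of_comp (Polynomial.degreeLT ℂ 3).subtype
      exact hLI
    have hcard := hLI'.fintype_card_le_finrank
    have hfr : Module.finrank ℂ (Polynomial.degreeLT ℂ 3) = 3 := by
      rw [LinearEquiv.finrank_eq (Polynomial.degreeLTEquiv ℂ 3)]
      simp
    rw [hfr] at hcard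
    simp at hcard
  refine ⟨hLI, hdeg3, fun hsup => ?_⟩
  -- Step D : the degree-3 case
  have hdle : ∀ i, (F i).natDegree ≤ 3 := fun i => hsup ▸ Finset.le_sup (f := fun i => (F i).natDegree) (Finset.mem_univ i)
  set A : Matrix (Fin 4) (Fin 4) ℂ := Matrix.of (fun i (j : Fin 4) => (F i).coeff (j : ℕ)) with hA
  have hrep : ∀ i, F i = ∑ j : Fin 4, C (A i j) * X ^ (j : ℕ) := by
    intro i
    ext n
    rw [Polynomial.finset_sum_coeff]
    simp only [Polynomial.coeff_C_mul, Polynomial.coeff_X_pow, hA, Matrix.of_apply]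
    rcases lt_or_ge n 4 with hn | hn
    · interval_cases n <;> simp [Fin.sum_univ_four, show ((0:Fin 4):ℕ) = 0 from rfl,
        show ((1:Fin 4):ℕ) = 1 from rfl, show ((2:Fin 4):ℕ) = 2 from rfl,
        show ((3:Fin 4):ℕ) = 3 from rfl]
    · rw [Polynomial.coeff_eq_zero_of_natDegree_lt (lt_of_le_of_lt (hdle i) (by omega))]
      rw [Finset.sum_eq_zero]
      intro j _
      have hj : n ≠ (j : ℕ) := by omega
      simp [hj]
  refine ⟨A, ?_, hrep⟩
  intro hdet0
  rw [← Matrix.det_transpose] at hdet0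
  obtain ⟨x, hx0, hxA⟩ := Matrix.exists_mulVec_eq_zero_iff.mpr hdet0
  have e : ∀ j : Fin 4, A 0 j * x 0 + A 1 j * x 1 + A 2 j * x 2 + A 3 j * x 3 = 0 := by
    intro j
    have h4 := congrFun hxA j
    simpa [Matrix.mulVec, dotProduct, Fin.sum_univ_four, Matrix.transpose_apply] using h4
  have eC : ∀ j : Fin 4, C (A 0 j) * C (x 0) + C (A 1 j) * C (x 1) + C (A 2 j) * C (x 2)
      + C (A 3 j) * C (x 3) = 0 := by
    intro j
    have h5 := congrArg C (e j)
    simpa only [_root_.map_add, _root_.map_mul, map_zero] using h5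
  have hzero : ∑ i : Fin 4, x i • F i = 0 := by
    simp only [Polynomial.smul_eq_C_mul, Fin.sum_univ_four]
    rw [hrep 0, hrep 1, hrep 2, hrep 3]
    simp only [Fin.sum_univ_four]
    linear_combination (eC 0) * X ^ ((0 : Fin 4) : ℕ) + (eC 1) * X ^ ((1 : Fin 4) : ℕ)
      + (eC 2) * X ^ ((2 : Fin 4) : ℕ) + (eC 3) * X ^ ((3 : Fin 4) : ℕ)
  have hall := Fintype.linearIndependent_iff.mp hLI x hzero
  exact hx0 (funext fun i => hall i)
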